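/- Crossings must exist: in the setup of the no-ghosts lemma, suppose additionally that the roles are assigned final positions compatible with label order (role r ◁ role r' implies y_r < y_{r'}) and each path P_I ends at y_{π(I)}. If G is nonempty (there is at least one ghost role) and π satisfies the candidacy condition (ε(g) = δ_π(g) for all ghosts g), then some two paths P_I, P_J must meet. Equivalently: there is no order-preserving bijection (one with π⁻¹(H_1) ◁ ... ◁ π⁻¹(H_ℓ) and the ghost constraint) when G ≠ ∅. -/
import Mathlib

/-- A strictly monotone map between `Fin` types grows at least as fast as the identity. -/
private lemma fin_strictMono_le {m k : ℕ} (f : Fin m → Fin k) (hf : StrictMono f)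
    (i : Fin m) : (i : ℕ) ≤ (f i : ℕ) := by
  have key : ∀ (d : ℕ) (i : Fin m), (i : ℕ) = d → d ≤ (f i : ℕ) := by
    intro d
    induction d with
    | zero => intro i _; omega
    | succ d ih =>
      intro i hi
      have hd : d < m := by omega
      have h1 : (⟨d, hd⟩ : Fin m) < i := by
        rw [Fin.lt_def, Fin.val_mk]; omega
      have h2 := hf h1
      have h3 := ih ⟨d, hd⟩ rfl
      rw [Fin.lt_def] at h2
      omega
  exact key _ i rfl

set_option maxHeartbeats 1000000 in
/-- Crossings must exist (purely combinatorial corollary): when the ghost set is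
nonempty, no bijection satisfies the heir-ordering condition together with the
exactly-one ghost constraint. -/
theorem crossings_must_exist
    (n ℓ : ℕ) (hn : 1 ≤ n) (hℓ : 1 ≤ ℓ)
    (a b : Fin ℓ → ℕ)
    (hab : ∀ j, a j < b j)
    (ha1 : a ⟨0, hℓ⟩ = 1)
    (hbn : b ⟨ℓ - 1, by omega⟩ = n + 1)
    (hchain : ∀ (j : Fin ℓ) (hj : (j : ℕ) + 1 < ℓ), b j = a ⟨(j : ℕ) + 1, hj⟩)
    (isGhost : ℕ → Prop)
    (hGhost : ∀ g, isGhost g ↔ ∃ j : Fin ℓ, a j < g ∧ g < b j)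
    (heirOf : {g : ℕ // isGhost g} → Fin ℓ)
    (hheirOf : ∀ g : {g : ℕ // isGhost g}, a (heirOf g) < g.1 ∧ g.1 < b (heirOf g))
    -- the ghost set is nonempty
    (hne : ∃ g, isGhost g)
    (π : Fin n ≃ (Fin ℓ ⊕ {g : ℕ // isGhost g}))
    (hHeirOrder : StrictMono fun j : Fin ℓ => π.symm (Sum.inl j))
    (hGhostCon : ∀ g : {g : ℕ // isGhost g},
      Xor'
        (g.1 ≤ (π.symm (Sum.inr g) : ℕ) + 1 ∧
          π.symm (Sum.inr g) < π.symm (Sum.inl (heirOf g)))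
        (π.symm (Sum.inl (heirOf g)) < π.symm (Sum.inr g) ∧
          (π.symm (Sum.inr g) : ℕ) + 2 ≤ g.1)) :
    False := by
  classical
  -- minimal ghost
  have hmingen : ∀ g, isGhost g → ∃ g0, isGhost g0 ∧ ∀ g', isGhost g' → g0 ≤ g' := by
    intro g
    induction g using Nat.strong_induction_on with
    | _ g ih =>
      intro hg
      by_cases h : ∃ g', g' < g ∧ isGhost g'
      · obtain ⟨g', h1, h2⟩ := h
        exact ih g' h1 h2
      · push_neg at h
        exact ⟨g, hg, fun g' hg' => le_of_not_gt fun hlt => h g' hlt hg'⟩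
  obtain ⟨g', hg'⟩ := hne
  obtain ⟨g₀, hg₀, hmin⟩ := hmingen g' hg'
  set G₀ : {g : ℕ // isGhost g} := ⟨g₀, hg₀⟩ with hG₀
  set h₀ : Fin ℓ := heirOf G₀ with hh₀
  -- monotonicity of a (as a function of the index, over ℕ)
  have step : ∀ (k : ℕ) (hk : k + 1 < ℓ), a ⟨k, by omega⟩ < a ⟨k + 1, hk⟩ := by
    intro k hk
    have h3 : b ⟨k, by omega⟩ = a ⟨k + 1, hk⟩ := hchain ⟨k, by omega⟩ hk
    have h4 := hab ⟨k, by omega⟩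
    omega
  have amono : ∀ (k k' : ℕ) (hk' : k' < ℓ) (hkk : k ≤ k'), a ⟨k, by omega⟩ ≤ a ⟨k', hk'⟩ := by
    intro k k'
    induction k' with
    | zero =>
      intro hk' hkk
      have : k = 0 := by omega
      subst this; exact le_rfl
    | succ k' ih =>
      intro hk' hkk
      rcases Nat.lt_or_ge k (k' + 1) with h | h
      · exact le_trans (ih (by omega) (by omega)) (le_of_lt (step k' hk'))
      · have : k = k' + 1 := by omega
        subst this; exact le_rfl
  -- a is determined up to the heir of the minimal ghost
  have hB : ∀ (k : ℕ) (hk : k < ℓ), k ≤ (h₀ : ℕ) → a ⟨k, hk⟩ = 1 + k := by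
    intro k
    induction k with
    | zero => intro hk _; simpa using ha1
    | succ k ih =>
      intro hk hkh
      have hk' : k < ℓ := by omega
      have hak : a ⟨k, hk'⟩ = 1 + k := ih hk' (by omega)
      have h4 : b ⟨k, hk'⟩ = a ⟨k + 1, hk⟩ := hchain ⟨k, hk'⟩ hk
      have hbk : b ⟨k, hk'⟩ = a ⟨k, hk'⟩ + 1 := by
        by_contra hne'
        have hlt : a ⟨k, hk'⟩ + 1 < b ⟨k, hk'⟩ := by have := hab ⟨k, hk'⟩; omega
        have hg' : isGhost (a ⟨k, hk'⟩ + 1) := (hGhost _).2 ⟨⟨k, hk'⟩, by omega, hlt⟩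
        have h1 : g₀ ≤ a ⟨k, hk'⟩ + 1 := hmin _ hg'
        have h2 : a h₀ < g₀ := (hheirOf G₀).1
        have h3 : a ⟨k + 1, hk⟩ ≤ a ⟨(h₀ : ℕ), h₀.isLt⟩ := amono _ _ h₀.isLt hkh
        have h5 : a ⟨(h₀ : ℕ), h₀.isLt⟩ = a h₀ := by congr
        omega
      omega
  have hah₀ : a h₀ = 1 + (h₀ : ℕ) := by
    have := hB (h₀ : ℕ) h₀.isLt le_rfl
    have h5 : a ⟨(h₀ : ℕ), h₀.isLt⟩ = a h₀ := by congr
    omega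
  -- the minimal ghost is h₀ + 2
  have hg₀val : g₀ = (h₀ : ℕ) + 2 := by
    have h1 : a h₀ < g₀ := (hheirOf G₀).1
    have h2 : g₀ < b h₀ := (hheirOf G₀).2
    by_contra hne'
    have h3 : a h₀ + 1 < g₀ := by omega
    have hg' : isGhost (a h₀ + 1) := (hGhost _).2 ⟨h₀, by omega, by omega⟩
    have := hmin _ hg'
    omega
  -- every ghost's heir is at least h₀
  have hheirlb : ∀ g : {g : ℕ // isGhost g}, (h₀ : ℕ) ≤ (heirOf g : ℕ) := by
    intro g
    by_contra hlt
    push_neg at hlt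
    have h1 : (heirOf g : ℕ) + 1 < ℓ := by have := h₀.isLt; omega
    have h2 : b (heirOf g) = a ⟨(heirOf g : ℕ) + 1, h1⟩ := hchain _ h1
    have h3 : a ⟨(heirOf g : ℕ) + 1, h1⟩ ≤ a ⟨(h₀ : ℕ), h₀.isLt⟩ := amono _ _ h₀.isLt (by omega)
    have h5 : a ⟨(h₀ : ℕ), h₀.isLt⟩ = a h₀ := by congr
    have h4 := (hheirOf g).2
    have h6 : a h₀ < g₀ := (hheirOf G₀).1
    have h7 := hmin _ g.2
    omega
  -- heirs' positions grow at least as fast as the identity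
  have hq : ∀ j : Fin ℓ, (j : ℕ) ≤ (π.symm (Sum.inl j) : ℕ) :=
    fun j => fin_strictMono_le _ hHeirOrder j
  -- the heir h₀ sits at position ≥ h₀ + 2
  have hG₀v : (G₀ : ℕ) = g₀ := rfl
  have hkey : (h₀ : ℕ) + 2 ≤ (π.symm (Sum.inl h₀) : ℕ) := by
    rcases hGhostCon G₀ with ⟨⟨h1, h2⟩, -⟩ | ⟨⟨h1, h2⟩, -⟩
    · rw [Fin.lt_def] at h2
      rw [← hh₀] at h2
      omega
    · rw [Fin.lt_def] at h1
      rw [← hh₀] at h1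
      have := hq h₀
      omega
  -- every ghost sits at position ≥ h₀ + 1
  have hghostpos : ∀ g : {g : ℕ // isGhost g}, (h₀ : ℕ) + 1 ≤ (π.symm (Sum.inr g) : ℕ) := by
    intro g
    rcases hGhostCon g with ⟨⟨h1, h2⟩, -⟩ | ⟨⟨h1, h2⟩, -⟩
    · have := hmin _ g.2; omega
    · have h3 : π.symm (Sum.inl h₀) ≤ π.symm (Sum.inl (heirOf g)) :=
        hHeirOrder.monotone (Fin.le_def.mpr (hheirlb g))
      rw [Fin.lt_def] at h1
      rw [Fin.le_def] at h3
      omega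
  have hn3 : (h₀ : ℕ) + 3 ≤ n := by
    have := (π.symm (Sum.inl h₀)).isLt
    omega
  -- positions 0..h₀ are all occupied by heirs
  have hrole : ∀ i : Fin ((h₀ : ℕ) + 1), ∃ j : Fin ℓ, π ⟨i.1, by omega⟩ = Sum.inl j := by
    intro i
    rcases hs : π ⟨i.1, by omega⟩ with j | g
    · exact ⟨j, rfl⟩
    · exfalso
      have e : π.symm (Sum.inr g) = ⟨i.1, by omega⟩ := by
        rw [← hs, Equiv.symm_apply_apply]
      have h2 := hghostpos g
      rw [e] at h2
      have h3 : (h₀ : ℕ) + 1 ≤ (i : ℕ) := h2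
      omega
  choose φ hφ using hrole
  have hφmono : StrictMono φ := by
    intro i i' hii
    have e1 : π.symm (Sum.inl (φ i)) = ⟨i.1, by omega⟩ :=
      π.symm_apply_eq.mpr (hφ i).symm
    have e2 : π.symm (Sum.inl (φ i')) = ⟨i'.1, by omega⟩ :=
      π.symm_apply_eq.mpr (hφ i').symm
    have : π.symm (Sum.inl (φ i)) < π.symm (Sum.inl (φ i')) := by
      rw [Fin.lt_def, e1, e2, Fin.val_mk, Fin.val_mk]
      exact hii
    exact hHeirOrder.lt_iff_lt.mp this
  have hlast : (h₀ : ℕ) ≤ (φ ⟨(h₀ : ℕ), Nat.lt_succ_self _⟩ : ℕ) :=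
    fin_strictMono_le φ hφmono ⟨(h₀ : ℕ), Nat.lt_succ_self _⟩
  have e : π.symm (Sum.inl (φ ⟨(h₀ : ℕ), Nat.lt_succ_self _⟩)) = ⟨(h₀ : ℕ), by omega⟩ :=
    π.symm_apply_eq.mpr (hφ ⟨(h₀ : ℕ), Nat.lt_succ_self _⟩).symm
  have hlt : φ ⟨(h₀ : ℕ), Nat.lt_succ_self _⟩ < h₀ := by
    have h1 : π.symm (Sum.inl (φ ⟨(h₀ : ℕ), Nat.lt_succ_self _⟩)) < π.symm (Sum.inl h₀) := by
      rw [Fin.lt_def, e, Fin.val_mk]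
      omega
    exact hHeirOrder.lt_iff_lt.mp h1
  rw [Fin.lt_def] at hlt
  omega
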